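/- Suppose Q is a medial quandle and S ⊆ Q is a generating set of Q (the smallest subset of Q containing S and closed under ▷ and ▷⁻¹ is Q itself). Then the Λ-module Dis(Q) is generated by the elements β_s β_{s′}⁻¹ with s, s′ ∈ S. -/

import Mathlib

open LaurentPolynomial

set_option synthInstance.maxHeartbeats 1000000
set_option maxHeartbeats 1000000

noncomputable section

/-- The ring `Λ = ℤ[t,t⁻¹]` of Laurent polynomials with integer coefficients. -/
abbrev Λ : Type := LaurentPolynomial ℤ

/-- The variable `t ∈ Λ`. -/
abbrev tL : Λ := T 1

/-- A medial quandle structure on a type `Q`: an idempotent binary operation whose right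
translations are bijections, satisfying the medial law. -/
structure MedialQuandleStr (Q : Type*) where
  op : Q → Q → Q
  idem : ∀ x, op x x = x
  bij : ∀ y, Function.Bijective fun x => op x y
  medial : ∀ w x y z, op (op w x) (op y z) = op (op w y) (op x z)

/-- A quandle structure on a type `T`. -/
structure QuandleStr (T : Type*) where
  op : T → T → T
  idem : ∀ x, op x x = x
  bij : ∀ y, Function.Bijective fun x => op x y
  distrib : ∀ x y z, op (op x y) z = op (op x z) (op y z)

namespace MedialQuandleStr

variable {Q : Type*} (s : MedialQuandleStr Q)

/-- The translation `β_y : x ↦ x ▷ y`, as a permutation of `Q`. -/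
def β (y : Q) : Equiv.Perm Q := Equiv.ofBijective _ (s.bij y)

/-- `β(Q)`: the subgroup of permutations generated by the translations. -/
def transGroup : Subgroup (Equiv.Perm Q) := Subgroup.closure (Set.range s.β)

/-- The displacement group `Dis(Q)`, generated by the elementary displacements
`β_y β_z⁻¹`. -/
def Dis : Subgroup (Equiv.Perm Q) :=
  Subgroup.closure {d : Equiv.Perm Q | ∃ y z, d = s.β y * (s.β z)⁻¹}

/-- The orbit of `q`: the smallest subset of `Q` containing `q` and closed under the
action of `β(Q)`. -/
def orbit (q : Q) : Set Q := {x | ∃ g ∈ s.transGroup, g q = x}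

end MedialQuandleStr

section Construction

variable {M : Type*} [AddCommGroup M] [Module Λ M] {I : Type*}

/-- The carrier of the quandle `Q(N,(m_i),(X_i))`: the disjoint union of the quotients
`Q_i = N/X_i`. -/
def QCar (N : Submodule Λ M) (X : I → Submodule Λ ↥N) : Type _ :=
  Σ i : I, ↥N ⧸ X i

/-- The condition `(1-t)·X_i = 0` for all `i`. -/
def annCond (N : Submodule Λ M) (X : I → Submodule Λ ↥N) : Prop :=
  ∀ i, ∀ x ∈ X i, (1 - tL) • (x : ↥N) = 0

/-- Multiplication by `1-t`, descended from `N/X_j` to `N` (well defined since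
`(1-t)·X_j = 0`). -/
def oneSubT (N : Submodule Λ M) {X : I → Submodule Λ ↥N} (h : annCond N X) (j : I) :
    (↥N ⧸ X j) →ₗ[Λ] ↥N :=
  Submodule.liftQ (X j) ((1 - tL) • (LinearMap.id : ↥N →ₗ[Λ] ↥N))
    (fun x hx => by simpa using h j x hx)

/-- The operation of `Q(N,(m_i),(X_i))`: for `x ∈ Q_i` and `y ∈ Q_j`,
`x ▷ y = m_j - m_i + t·x + (1-t)·y + X_i ∈ Q_i`. -/
def qop (N : Submodule Λ M) (m : I → M) {X : I → Submodule Λ ↥N}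
    (hm : ∀ i j, m i - m j ∈ N) (h : annCond N X) :
    QCar N X → QCar N X → QCar N X :=
  fun x y =>
    ⟨x.1, Submodule.Quotient.mk (⟨m y.1 - m x.1, hm y.1 x.1⟩ : ↥N)
        + tL • x.2 + Submodule.Quotient.mk (oneSubT N h y.1 y.2)⟩

end Construction


namespace MedialQuandleStr

variable {Q : Type*} (s : MedialQuandleStr Q)

lemma rdistrib (x y z : Q) : s.op (s.op x y) z = s.op (s.op x z) (s.op y z) := by
  have h := s.medial x y z z
  rwa [s.idem z] at h

lemma conjA (y z : Q) : s.β z * s.β y = s.β (s.op y z) * s.β z := by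
  ext a
  exact s.rdistrib a y z

lemma conjB (x y z : Q) : s.β (s.op y z) * s.β x = s.β (s.op x z) * s.β y := by
  ext w
  exact s.medial w x y z

lemma βop (x y : Q) : s.β (s.op x y) = s.β y * s.β x * (s.β y)⁻¹ := by
  rw [eq_mul_inv_iff_mul_eq]
  exact (s.conjA x y).symm

lemma keyid (x y z : Q) :
    s.β y * (s.β z)⁻¹ * s.β x = s.β x * (s.β z)⁻¹ * s.β y := by
  have h2 := s.conjB x y z
  rw [s.βop y z, s.βop x z] at h2
  simp only [mul_assoc] at h2 ⊢
  exact mul_left_cancel h2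

lemma keyid_inv (x y z : Q) :
    (s.β x)⁻¹ * s.β z * (s.β y)⁻¹ = (s.β y)⁻¹ * s.β z * (s.β x)⁻¹ := by
  have h := congrArg Inv.inv (s.keyid x y z)
  simpa [mul_inv_rev, mul_assoc] using h

lemma elem_comm (a b c d : Q) :
    (s.β a * (s.β b)⁻¹) * (s.β c * (s.β d)⁻¹) =
      (s.β c * (s.β d)⁻¹) * (s.β a * (s.β b)⁻¹) := by
  calc (s.β a * (s.β b)⁻¹) * (s.β c * (s.β d)⁻¹)
      = (s.β a * (s.β b)⁻¹ * s.β c) * (s.β d)⁻¹ := by group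
    _ = (s.β c * (s.β b)⁻¹ * s.β a) * (s.β d)⁻¹ := by rw [s.keyid c a b]
    _ = s.β c * ((s.β b)⁻¹ * s.β a * (s.β d)⁻¹) := by group
    _ = s.β c * ((s.β d)⁻¹ * s.β a * (s.β b)⁻¹) := by rw [s.keyid_inv b d a]
    _ = (s.β c * (s.β d)⁻¹) * (s.β a * (s.β b)⁻¹) := by group

lemma dis_comm_elem {d : Equiv.Perm Q} (hd : d ∈ s.Dis) (y z : Q) :
    d * (s.β y * (s.β z)⁻¹) = (s.β y * (s.β z)⁻¹) * d := by
  have hcen : d ∈ Subgroup.centralizer {x : Equiv.Perm Q | ∃ y z, x = s.β y * (s.β z)⁻¹} := by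
    refine (Subgroup.closure_le _).mpr ?_ hd
    rintro g ⟨a, b, rfl⟩
    rw [SetLike.mem_coe, Subgroup.mem_centralizer_iff]
    rintro h ⟨c, e, rfl⟩
    exact s.elem_comm c e a b
  exact (Subgroup.mem_centralizer_iff.mp hcen _ ⟨y, z, rfl⟩).symm

lemma dis_comm {d e : Equiv.Perm Q} (hd : d ∈ s.Dis) (he : e ∈ s.Dis) :
    d * e = e * d := by
  have hcen : e ∈ Subgroup.centralizer {d} := by
    refine (Subgroup.closure_le _).mpr ?_ he
    rintro g ⟨y, z, rfl⟩
    rw [SetLike.mem_coe, Subgroup.mem_centralizer_iff]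
    rintro h hh
    rw [Set.mem_singleton_iff] at hh
    subst hh
    exact s.dis_comm_elem hd y z
  exact Subgroup.mem_centralizer_iff.mp hcen d rfl

lemma conj_elem (q y z : Q) :
    s.β q * (s.β y * (s.β z)⁻¹) * (s.β q)⁻¹ = s.β (s.op y q) * (s.β (s.op z q))⁻¹ := by
  rw [s.βop y q, s.βop z q]
  group

lemma conj_mem_dis (q : Q) {d : Equiv.Perm Q} (hd : d ∈ s.Dis) :
    s.β q * d * (s.β q)⁻¹ ∈ s.Dis := by
  induction hd using Subgroup.closure_induction with
  | mem x hx =>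
    obtain ⟨y, z, rfl⟩ := hx
    rw [s.conj_elem q y z]
    exact Subgroup.subset_closure ⟨_, _, rfl⟩
  | one => simpa using one_mem s.Dis
  | mul x y hx hy ihx ihy =>
    have : s.β q * (x * y) * (s.β q)⁻¹
        = (s.β q * x * (s.β q)⁻¹) * (s.β q * y * (s.β q)⁻¹) := by group
    rw [this]; exact mul_mem ihx ihy
  | inv x hx ihx =>
    have : s.β q * x⁻¹ * (s.β q)⁻¹ = (s.β q * x * (s.β q)⁻¹)⁻¹ := by group
    rw [this]; exact inv_mem ihx

lemma conj_inv_mem_dis (q : Q) {d : Equiv.Perm Q} (hd : d ∈ s.Dis) :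
    (s.β q)⁻¹ * d * s.β q ∈ s.Dis := by
  induction hd using Subgroup.closure_induction with
  | mem x hx =>
    obtain ⟨y, z, rfl⟩ := hx
    have h1 : s.op ((s.β q)⁻¹ y) q = y := Equiv.apply_symm_apply (s.β q) y
    have h2 : s.op ((s.β q)⁻¹ z) q = z := Equiv.apply_symm_apply (s.β q) z
    have h3 := s.conj_elem q ((s.β q)⁻¹ y) ((s.β q)⁻¹ z)
    rw [h1, h2] at h3
    have h4 : (s.β q)⁻¹ * (s.β y * (s.β z)⁻¹) * s.β q
        = s.β ((s.β q)⁻¹ y) * (s.β ((s.β q)⁻¹ z))⁻¹ := by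
      rw [← h3]; group
    rw [h4]
    exact Subgroup.subset_closure ⟨_, _, rfl⟩
  | one => simpa using one_mem s.Dis
  | mul x y hx hy ihx ihy =>
    have : (s.β q)⁻¹ * (x * y) * s.β q
        = ((s.β q)⁻¹ * x * s.β q) * ((s.β q)⁻¹ * y * s.β q) := by group
    rw [this]; exact mul_mem ihx ihy
  | inv x hx ihx =>
    have : (s.β q)⁻¹ * x⁻¹ * s.β q = ((s.β q)⁻¹ * x * s.β q)⁻¹ := by group
    rw [this]; exact inv_mem ihx

lemma conj_eq (q₀ q : Q) {d : Equiv.Perm Q} (hd : d ∈ s.Dis) :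
    s.β q * d * (s.β q)⁻¹ = s.β q₀ * d * (s.β q₀)⁻¹ := by
  have hg : s.β q * (s.β q₀)⁻¹ ∈ s.Dis := Subgroup.subset_closure ⟨q, q₀, rfl⟩
  have hc : s.β q₀ * d * (s.β q₀)⁻¹ ∈ s.Dis := s.conj_mem_dis q₀ hd
  have hcomm := s.dis_comm hg hc
  have hstep : s.β q * d * (s.β q)⁻¹
      = (s.β q * (s.β q₀)⁻¹) * (s.β q₀ * d * (s.β q₀)⁻¹) * (s.β q * (s.β q₀)⁻¹)⁻¹ := by
    group
  rw [hstep, hcomm]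
  group

lemma conj_inv_eq (q₀ q : Q) {d : Equiv.Perm Q} (hd : d ∈ s.Dis) :
    (s.β q)⁻¹ * d * s.β q = (s.β q₀)⁻¹ * d * s.β q₀ := by
  have hd' : (s.β q₀)⁻¹ * d * s.β q₀ ∈ s.Dis := s.conj_inv_mem_dis q₀ hd
  have h := s.conj_eq q₀ q hd'
  have h2 : s.β q * ((s.β q₀)⁻¹ * d * s.β q₀) * (s.β q)⁻¹ = d := by
    rw [h]; group
  have h5 : (s.β q)⁻¹ * (s.β q * ((s.β q₀)⁻¹ * d * s.β q₀) * (s.β q)⁻¹) * s.β q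
      = (s.β q₀)⁻¹ * d * s.β q₀ := by group
  rw [h2] at h5
  exact h5

end MedialQuandleStr

/-- If `S` generates the medial quandle `Q` (the smallest subset of `Q`
containing `S` and closed under `▷` and `▷⁻¹` is `Q` itself), then the `Λ`-module
`Dis(Q)` is generated by the elements `β_s β_{s'}⁻¹` with `s, s' ∈ S`: every subgroup
`H` of `Dis(Q)` containing these elements and closed under scalar multiplication by
`t^{±1}` (i.e. under conjugation by a translation, in both directions) is all of
`Dis(Q)`. -/
theorem stmt9 {Q : Type*} (s : MedialQuandleStr Q) (S : Set Q) (q₀ : Q)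
    (hgen : ∀ C : Set Q, S ⊆ C →
      (∀ x ∈ C, ∀ y ∈ C, s.op x y ∈ C ∧ (s.β y)⁻¹ x ∈ C) → ∀ q : Q, q ∈ C) :
    ∀ H : Subgroup (Equiv.Perm Q), H ≤ s.Dis →
      (∀ a ∈ S, ∀ b ∈ S, s.β a * (s.β b)⁻¹ ∈ H) →
      (∀ d ∈ H, s.β q₀ * d * (s.β q₀)⁻¹ ∈ H) →
      (∀ d ∈ H, (s.β q₀)⁻¹ * d * s.β q₀ ∈ H) →
      s.Dis ≤ H := by
  intro H hHDis hSgen hconj hconj'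
  rcases S.eq_empty_or_nonempty with hS0 | ⟨s₀, hs₀⟩
  · exact absurd (hgen ∅ (by simp [hS0]) (by simp) q₀) (Set.notMem_empty q₀)
  have hconjy : ∀ q : Q, ∀ e ∈ H, s.β q * e * (s.β q)⁻¹ ∈ H := by
    intro q e he
    rw [s.conj_eq q₀ q (hHDis he)]
    exact hconj e he
  have hconjy' : ∀ q : Q, ∀ e ∈ H, (s.β q)⁻¹ * e * s.β q ∈ H := by
    intro q e he
    rw [s.conj_inv_eq q₀ q (hHDis he)]
    exact hconj' e he
  set C : Set Q := {q : Q | ∀ a ∈ S, s.β q * (s.β a)⁻¹ ∈ H} with hC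
  have hSC : S ⊆ C := fun x hx a ha => hSgen x hx a ha
  have hclosed : ∀ x ∈ C, ∀ y ∈ C, s.op x y ∈ C ∧ (s.β y)⁻¹ x ∈ C := by
    intro x hx y hy
    constructor
    · intro a ha
      have e1 : s.β x * (s.β a)⁻¹ ∈ H := hx a ha
      have e2 : s.β y * (s.β a)⁻¹ ∈ H := hy a ha
      have m1 : s.β y * (s.β x * (s.β a)⁻¹) * (s.β y)⁻¹ ∈ H := hconjy y _ e1
      have m2 : s.β a * (s.β y * (s.β a)⁻¹)⁻¹ * (s.β a)⁻¹ ∈ H :=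
        hconjy a _ (inv_mem e2)
      have key : s.β (s.op x y) * (s.β a)⁻¹ =
          (s.β y * (s.β x * (s.β a)⁻¹) * (s.β y)⁻¹) *
            ((s.β y * (s.β a)⁻¹) * (s.β a * (s.β y * (s.β a)⁻¹)⁻¹ * (s.β a)⁻¹)) := by
        rw [s.βop x y]; group
      show s.β (s.op x y) * (s.β a)⁻¹ ∈ H
      rw [key]
      exact mul_mem m1 (mul_mem e2 m2)
    · intro a ha
      have hxy : s.op ((s.β y)⁻¹ x) y = x := Equiv.apply_symm_apply (s.β y) x
      have e1 : s.β x * (s.β a)⁻¹ ∈ H := hx a ha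
      have e2 : s.β y * (s.β a)⁻¹ ∈ H := hy a ha
      have hW : (s.β y * (s.β a)⁻¹) * (s.β a * (s.β y * (s.β a)⁻¹)⁻¹ * (s.β a)⁻¹) ∈ H :=
        mul_mem e2 (hconjy a _ (inv_mem e2))
      have hg : (s.β x * (s.β a)⁻¹) *
          ((s.β y * (s.β a)⁻¹) * (s.β a * (s.β y * (s.β a)⁻¹)⁻¹ * (s.β a)⁻¹))⁻¹ ∈ H :=
        mul_mem e1 (inv_mem hW)
      have hb : s.β x = s.β y * s.β ((s.β y)⁻¹ x) * (s.β y)⁻¹ := by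
        rw [← hxy, s.βop ((s.β y)⁻¹ x) y, hxy]
      have key2 : s.β y * (s.β ((s.β y)⁻¹ x) * (s.β a)⁻¹) * (s.β y)⁻¹ =
          (s.β x * (s.β a)⁻¹) *
            ((s.β y * (s.β a)⁻¹) * (s.β a * (s.β y * (s.β a)⁻¹)⁻¹ * (s.β a)⁻¹))⁻¹ := by
        rw [hb]; group
      have h3 : s.β y * (s.β ((s.β y)⁻¹ x) * (s.β a)⁻¹) * (s.β y)⁻¹ ∈ H := by
        rw [key2]; exact hg
      have h4 := hconjy' y _ h3
      have heq : (s.β y)⁻¹ * (s.β y * (s.β ((s.β y)⁻¹ x) * (s.β a)⁻¹) * (s.β y)⁻¹) * s.β y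
          = s.β ((s.β y)⁻¹ x) * (s.β a)⁻¹ := by group
      rw [heq] at h4
      exact h4
  have hall := hgen C hSC hclosed
  refine (Subgroup.closure_le H).mpr ?_
  rintro g ⟨y, z, rfl⟩
  have h1 : s.β y * (s.β s₀)⁻¹ ∈ H := hall y s₀ hs₀
  have h2 : s.β z * (s.β s₀)⁻¹ ∈ H := hall z s₀ hs₀
  have hdec : s.β y * (s.β z)⁻¹ = (s.β y * (s.β s₀)⁻¹) * (s.β z * (s.β s₀)⁻¹)⁻¹ := by
    group
  rw [SetLike.mem_coe, hdec]
  exact mul_mem h1 (inv_mem h2)
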